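/- Let q ≥ 1 and β_1, …, β_q ∈ ℝ, and let F be the companion matrix of (β_1, …, β_q). Suppose F = T · Λ · T⁻¹ where T is an invertible q×q real matrix and Λ is a q×q real diagonal matrix whose diagonal entries all have absolute value at most λ for some λ ≥ 0; set κ = ‖T‖₂ · ‖T⁻¹‖₂. Suppose y : ℤ → ℝ satisfies y_t = −∑_{i=1}^q β_i · y_{t−i} for every integer t ≥ 1, and suppose c ≥ 0 is such that |y_{−i}| ≤ c for every i = 0, 1, …, q−1. Then for every integer m ≥ 0, |y_m| ≤ κ · λ^m · c · √q. -/

import Mathlib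

/-- The companion matrix of coefficients `β 0, …, β (q-1)` (representing β_1, …, β_q):
first row is `(-β_1, …, -β_q)`, subdiagonal entries equal `1`, all other entries `0`. -/
def companionMatrix {q : ℕ} (β : Fin q → ℝ) : Matrix (Fin q) (Fin q) ℝ :=
  fun i j =>
    if (i : ℕ) = 0 then -β j
    else if (i : ℕ) = (j : ℕ) + 1 then 1
    else 0

/-- The operator norm of a square real matrix induced by the Euclidean norm
(i.e. its largest singular value). -/
noncomputable def matrixOpNorm {q : ℕ} (A : Matrix (Fin q) (Fin q) ℝ) : ℝ :=
  ‖Matrix.toEuclideanCLM (𝕜 := ℝ) A‖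

lemma clm_apply {q : ℕ} (A : Matrix (Fin q) (Fin q) ℝ) (x : EuclideanSpace ℝ (Fin q))
    (i : Fin q) : (Matrix.toEuclideanCLM (𝕜 := ℝ) A x) i = ∑ j, A i j * x j := rfl

lemma diag_norm_le {q : ℕ} (d : Fin q → ℝ) (M : ℝ) (hM : 0 ≤ M) (hd : ∀ i, |d i| ≤ M) :
    ‖Matrix.toEuclideanCLM (𝕜 := ℝ) (Matrix.diagonal d)‖ ≤ M := by
  apply ContinuousLinearMap.opNorm_le_bound _ hM
  intro x
  have h1 : ∀ i, (Matrix.toEuclideanCLM (𝕜 := ℝ) (Matrix.diagonal d) x) i = d i * x i := by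
    intro i
    rw [clm_apply]
    rw [Finset.sum_eq_single i]
    · simp [Matrix.diagonal]
    · intro j _ hj; simp [Matrix.diagonal, Ne.symm hj]
    · simp
  have hn : ∀ z : EuclideanSpace ℝ (Fin q), ‖z‖ = Real.sqrt (∑ i, (z i)^2) := by
    intro z; rw [EuclideanSpace.norm_eq]; simp [sq_abs]
  rw [hn, hn]
  have : M * Real.sqrt (∑ i, (x i)^2) = Real.sqrt (∑ i, M^2 * (x i)^2) := by
    rw [← Finset.mul_sum, Real.sqrt_mul (by positivity), Real.sqrt_sq hM]
  rw [this]
  apply Real.sqrt_le_sqrt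
  apply Finset.sum_le_sum
  intro i _
  simp only [h1]
  rw [mul_pow]
  apply mul_le_mul_of_nonneg_right _ (sq_nonneg _)
  calc (d i)^2 = |d i|^2 := (sq_abs _).symm
    _ ≤ M^2 := by apply pow_le_pow_left₀ (abs_nonneg _) (hd i)

lemma coord_le_norm {q : ℕ} (x : EuclideanSpace ℝ (Fin q)) (i : Fin q) : |x i| ≤ ‖x‖ := by
  rw [EuclideanSpace.norm_eq]
  calc |x i| = Real.sqrt (‖x i‖^2) := by rw [Real.sqrt_sq_eq_abs]; simp
    _ ≤ _ := Real.sqrt_le_sqrt (Finset.single_le_sum (f := fun j => ‖x j‖^2)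
        (fun j _ => sq_nonneg _) (Finset.mem_univ i))

theorem stmt_5 {q : ℕ} (hq : 1 ≤ q) (β : Fin q → ℝ)
    (T Λ : Matrix (Fin q) (Fin q) ℝ) (d : Fin q → ℝ) (lam κ c : ℝ)
    (hlam : 0 ≤ lam) (hT : IsUnit T) (hΛ : Λ = Matrix.diagonal d)
    (hd : ∀ i, |d i| ≤ lam)
    (hF : companionMatrix β = T * Λ * T⁻¹)
    (hκ : κ = matrixOpNorm T * matrixOpNorm T⁻¹)
    (y : ℤ → ℝ)
    (hy : ∀ t : ℤ, 1 ≤ t → y t = -∑ i : Fin q, β i * y (t - ((i : ℕ) + 1)))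
    (hc : 0 ≤ c) (hyc : ∀ i : Fin q, |y (-(i : ℕ))| ≤ c) :
    ∀ m : ℤ, 0 ≤ m → |y m| ≤ κ * lam ^ m.toNat * c * Real.sqrt q := by
  set F := companionMatrix β with hFdef
  -- the state vector
  set v : ℤ → EuclideanSpace ℝ (Fin q) := fun t => WithLp.toLp 2 (fun i : Fin q => y (t - (i : ℕ))) with hv
  have hTinv : T⁻¹ * T = 1 := Matrix.nonsing_inv_mul T (Matrix.isUnit_iff_isUnit_det T |>.mp hT)
  -- powers of F
  have hFn : ∀ n : ℕ, F ^ n = T * Λ ^ n * T⁻¹ := by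
    intro n
    induction n with
    | zero => simp [Matrix.mul_nonsing_inv T (Matrix.isUnit_iff_isUnit_det T |>.mp hT)]
    | succ n ih =>
      rw [pow_succ, ih, hF, pow_succ]
      have : T * Λ ^ n * T⁻¹ * (T * Λ * T⁻¹) = T * Λ ^ n * (T⁻¹ * T) * Λ * T⁻¹ := by
        noncomm_ring
      rw [this, hTinv]
      noncomm_ring
  -- step recursion
  have hstep : ∀ t : ℤ, 1 ≤ t → Matrix.toEuclideanCLM (𝕜 := ℝ) F (v (t - 1)) = v t := by
    intro t ht
    ext i
    rw [clm_apply]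
    rcases Nat.eq_zero_or_pos (i : ℕ) with hi | hi
    · have : ∀ j : Fin q, F i j * v (t - 1) j = -(β j * y (t - ((j : ℕ) + 1))) := by
        intro j
        simp only [hFdef, companionMatrix, hi, if_pos rfl, hv]
        ring_nf
        congr 2
        push_cast
        ring
      rw [Finset.sum_congr rfl (fun j _ => this j), Finset.sum_neg_distrib, ← hy t ht]
      simp only [hv]
      have : t - ((i : ℕ) : ℤ) = t := by rw [hi]; push_cast; ring
      rw [this]
    · have hi1 : (i : ℕ) - 1 < q := lt_of_le_of_lt (Nat.pred_le _) i.isLt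
      set j₀ : Fin q := ⟨(i : ℕ) - 1, hi1⟩ with hj₀
      have hij : (i : ℕ) = (j₀ : ℕ) + 1 := by simp [hj₀]; omega
      have hsum : ∑ j, F i j * v (t - 1) j = v (t - 1) j₀ := by
        rw [Finset.sum_eq_single j₀]
        · simp only [hFdef, companionMatrix]
          rw [if_neg (by omega), if_pos hij, one_mul]
        · intro j _ hj
          have : (i : ℕ) ≠ (j : ℕ) + 1 := by
            intro h; apply hj; apply Fin.ext; omega
          simp only [hFdef, companionMatrix]
          rw [if_neg (by omega), if_neg this, zero_mul]
        · simp
      rw [hsum]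
      simp only [hv]
      congr 1
      omega
  -- v n = F^n applied to v 0
  have hvn : ∀ n : ℕ, v (n : ℤ) = Matrix.toEuclideanCLM (𝕜 := ℝ) (F ^ n) (v 0) := by
    intro n
    induction n with
    | zero => simp
    | succ n ih =>
      have h1 : ((n : ℤ) + 1) - 1 = (n : ℤ) := by ring
      have h2 := hstep ((n : ℤ) + 1) (by omega)
      rw [h1] at h2
      push_cast
      rw [pow_succ', map_mul, ContinuousLinearMap.mul_apply, ← ih]
      exact h2.symm
  -- norm of v 0
  have hv0 : ‖v 0‖ ≤ c * Real.sqrt q := by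
    rw [EuclideanSpace.norm_eq]
    have : c * Real.sqrt q = Real.sqrt (∑ _i : Fin q, c^2) := by
      rw [Finset.sum_const, Finset.card_univ, Fintype.card_fin, nsmul_eq_mul,
        Real.sqrt_mul (by positivity), Real.sqrt_sq hc, mul_comm]
    rw [this]
    apply Real.sqrt_le_sqrt
    apply Finset.sum_le_sum
    intro i _
    have h1 : ‖v 0 i‖ = |y (-(i : ℕ))| := by
      simp only [hv, Real.norm_eq_abs]
      congr 2
      push_cast; ring
    rw [h1]
    apply pow_le_pow_left₀ (abs_nonneg _) (hyc i)
  -- norm of F^n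
  have hFnorm : ∀ n : ℕ, ‖Matrix.toEuclideanCLM (𝕜 := ℝ) (F ^ n)‖ ≤ κ * lam ^ n := by
    intro n
    rw [hFn n, map_mul, map_mul, hκ, matrixOpNorm, matrixOpNorm]
    calc ‖Matrix.toEuclideanCLM (𝕜 := ℝ) T * Matrix.toEuclideanCLM (𝕜 := ℝ) (Λ ^ n) *
          Matrix.toEuclideanCLM (𝕜 := ℝ) T⁻¹‖
        ≤ ‖Matrix.toEuclideanCLM (𝕜 := ℝ) T * Matrix.toEuclideanCLM (𝕜 := ℝ) (Λ ^ n)‖ *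
          ‖Matrix.toEuclideanCLM (𝕜 := ℝ) T⁻¹‖ := norm_mul_le _ _
      _ ≤ ‖Matrix.toEuclideanCLM (𝕜 := ℝ) T‖ * ‖Matrix.toEuclideanCLM (𝕜 := ℝ) (Λ ^ n)‖ *
          ‖Matrix.toEuclideanCLM (𝕜 := ℝ) T⁻¹‖ := by
          apply mul_le_mul_of_nonneg_right (norm_mul_le _ _) (norm_nonneg _)
      _ ≤ ‖Matrix.toEuclideanCLM (𝕜 := ℝ) T‖ * lam ^ n *
          ‖Matrix.toEuclideanCLM (𝕜 := ℝ) T⁻¹‖ := by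
          apply mul_le_mul_of_nonneg_right _ (norm_nonneg _)
          apply mul_le_mul_of_nonneg_left _ (norm_nonneg _)
          rw [hΛ, Matrix.diagonal_pow]
          apply diag_norm_le _ _ (by positivity)
          intro i
          calc |(d ^ n) i| = |d i| ^ n := by rw [Pi.pow_apply, abs_pow]
            _ ≤ lam ^ n := pow_le_pow_left₀ (abs_nonneg _) (hd i) n
      _ = ‖Matrix.toEuclideanCLM (𝕜 := ℝ) T‖ * ‖Matrix.toEuclideanCLM (𝕜 := ℝ) T⁻¹‖ * lam ^ n := by
          ring
  -- conclusion
  intro m hm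
  set n := m.toNat with hn
  have hmn : m = (n : ℤ) := by omega
  have hy0 : y m = v m ⟨0, by omega⟩ := by
    simp only [hv]
    norm_num
  calc |y m| = |v m ⟨0, by omega⟩| := by rw [hy0]
    _ ≤ ‖v m‖ := coord_le_norm _ _
    _ = ‖Matrix.toEuclideanCLM (𝕜 := ℝ) (F ^ n) (v 0)‖ := by rw [hmn, hvn n]
    _ ≤ ‖Matrix.toEuclideanCLM (𝕜 := ℝ) (F ^ n)‖ * ‖v 0‖ := ContinuousLinearMap.le_opNorm _ _
    _ ≤ (κ * lam ^ n) * (c * Real.sqrt q) := by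
        apply mul_le_mul (hFnorm n) hv0 (norm_nonneg _)
        exact le_trans (norm_nonneg _) (hFnorm n)
    _ = κ * lam ^ n * c * Real.sqrt q := by ring
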